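/- Let F_q be a finite field of characteristic 2 with q = 2^n elements. Then the group V_1 = 1 + J(F_q[QD_32]) has exponent 16; that is, y^16 = 1 for every y in V_1, and 16 is the least such positive integer. -/

import Mathlib

/-- Relations for the quasidihedral group `QD_{2^k}`:
`a^(2^(k-1)) = 1`, `x^2 = 1`, `x * a * x = a^(2^(k-2)-1)`. -/
def qdRels (k : ℕ) : Set (FreeGroup (Fin 2)) :=
  {FreeGroup.of 0 ^ (2 ^ (k - 1)), FreeGroup.of 1 ^ 2,
    FreeGroup.of 1 * FreeGroup.of 0 * FreeGroup.of 1 * (FreeGroup.of 0 ^ (2 ^ (k - 2) - 1))⁻¹}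

/-- The quasidihedral group of order 32: `⟨a, x | a^16 = x^2 = 1, x a x = a^7⟩`. -/
def QD32 : Type := PresentedGroup (qdRels 5)

instance : Group QD32 := inferInstanceAs (Group (PresentedGroup (qdRels 5)))
open MonoidAlgebra

set_option linter.unusedSectionVars false

noncomputable section

abbrev Zm : Type := Multiplicative (ZMod 16)

variable (F : Type) [Field F] [CharP F 2]

abbrev Acyc : Type := MonoidAlgebra F Zm

def e7 : ZMod 16 ≃+ ZMod 16 where
  toFun z := 7 * z
  invFun z := 7 * z
  left_inv := by intro z; revert z; decide
  right_inv := by intro z; revert z; decide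
  map_add' := by intro a b; ring

def sg : Acyc F ≃ₐ[F] Acyc F := MonoidAlgebra.domCongr F F (AddEquiv.toMultiplicative e7)

def gk (k : ZMod 16) : Acyc F := MonoidAlgebra.of F Zm (Multiplicative.ofAdd k)

def epsA : Acyc F →ₐ[F] F := (MonoidAlgebra.lift F F Zm) 1

lemma gk_mul (j k : ZMod 16) : gk F j * gk F k = gk F (j + k) := by
  rw [gk, gk, gk, ← map_mul]; rfl

lemma gk_zero : gk F 0 = 1 := rfl

lemma gk_of (x : Zm) : MonoidAlgebra.of F Zm x = gk F (Multiplicative.toAdd x) := rfl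

lemma gk_pow (k : ZMod 16) (n : ℕ) : gk F k ^ n = gk F (n * k) := by
  rw [gk, gk, ← map_pow]
  congr 1
  show Multiplicative.ofAdd (n • k) = Multiplicative.ofAdd ((n : ZMod 16) * k)
  rw [nsmul_eq_mul]

instance : CharP (Acyc F) 2 := charP_of_injective_algebraMap' F 2

lemma sg_gk (k : ZMod 16) : sg F (gk F k) = gk F (7 * k) := by
  rw [sg, gk, gk, MonoidAlgebra.of_apply, MonoidAlgebra.of_apply,
    MonoidAlgebra.domCongr_single]
  rfl

lemma sg_sg (w : Acyc F) : sg F (sg F w) = w := by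
  have h : ((sg F).toAlgHom.comp (sg F).toAlgHom) = AlgHom.id F (Acyc F) := by
    apply MonoidAlgebra.algHom_ext
    intro x
    show sg F (sg F (MonoidAlgebra.of F Zm x)) = MonoidAlgebra.of F Zm x
    rw [gk_of, sg_gk, sg_gk]
    congr 1
    have h2 : (7 : ZMod 16) * (7 * Multiplicative.toAdd x) = (49 : ZMod 16) * Multiplicative.toAdd x := by ring
    rw [h2, show (49 : ZMod 16) = 1 by decide, one_mul]
    exact Subsingleton.elim _ _
  exact AlgHom.congr_fun h w

lemma epsA_gk (k : ZMod 16) : epsA F (gk F k) = 1 := by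
  rw [epsA, gk, MonoidAlgebra.lift_of]; rfl

lemma epsA_single (k : Zm) (c : F) : epsA F (MonoidAlgebra.single k c) = c := by
  rw [epsA, MonoidAlgebra.lift_single]; simp

lemma epsA_sg (w : Acyc F) : epsA F (sg F w) = epsA F w := by
  have h : ((epsA F).comp (sg F).toAlgHom) = epsA F := by
    apply MonoidAlgebra.algHom_ext
    intro x
    show epsA F (sg F (MonoidAlgebra.of F Zm x)) = epsA F (MonoidAlgebra.of F Zm x)
    rw [gk_of, sg_gk, epsA_gk, epsA_gk]
    exact Subsingleton.elim _ _
  exact AlgHom.congr_fun h w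

def mI : Ideal (Acyc F) := Ideal.span {gk F 1 - 1}

lemma gk_sub_one_mem (k : ZMod 16) : gk F k - 1 ∈ mI F := by
  rw [mI, Ideal.mem_span_singleton]
  have h := sub_dvd_pow_sub_pow (gk F 1) 1 k.val
  rw [one_pow] at h
  have h2 : gk F 1 ^ k.val = gk F k := by
    rw [gk_pow]
    congr 1
    rw [mul_one]
    exact ZMod.natCast_rightInverse k
  rwa [h2] at h

lemma tau_pow_16 : (gk F 1 - 1 : Acyc F) ^ 16 = 0 := by
  have h : (gk F 1 - 1 : Acyc F) = gk F 1 + 1 := CharTwo.sub_eq_add _ _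
  rw [h]
  have h4 : (gk F 1 + 1 : Acyc F) ^ 16 = (gk F 1 + 1) ^ 2 ^ 4 := by norm_num
  rw [h4, add_pow_char_pow, one_pow, gk_pow]
  norm_num
  rw [show ((16 : ZMod 16) : ZMod 16) = 0 by decide]
  rw [gk_zero]
  exact CharTwo.add_self_eq_zero 1

lemma mI_pow_16 : (mI F) ^ 16 = ⊥ := by
  rw [mI, Ideal.span_singleton_pow, tau_pow_16, Ideal.span_singleton_eq_bot]

lemma mem_mI_of_eps (w : Acyc F) (hw : epsA F w = 0) : w ∈ mI F := by
  have key : ∀ w : Acyc F, w - algebraMap F (Acyc F) (epsA F w) ∈ mI F := by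
    intro w
    induction w using MonoidAlgebra.induction_on with
    | of g =>
        rw [gk_of, epsA_gk]
        rw [map_one]
        exact gk_sub_one_mem F _
    | add f g hf hg =>
        have h : (f + g) - algebraMap F (Acyc F) (epsA F (f + g))
            = (f - algebraMap F (Acyc F) (epsA F f)) + (g - algebraMap F (Acyc F) (epsA F g)) := by
          rw [map_add, map_add]; ring
        rw [h]; exact Submodule.add_mem _ hf hg
    | smul r f hf =>
        have h : (r • f) - algebraMap F (Acyc F) (epsA F (r • f))
            = r • (f - algebraMap F (Acyc F) (epsA F f)) := by
          rw [map_smul, smul_sub]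
          congr 1
          rw [Algebra.algebraMap_eq_smul_one, Algebra.algebraMap_eq_smul_one, smul_assoc]
        rw [h]
        exact Submodule.smul_of_tower_mem _ r hf
  have hk := key w
  rwa [hw, map_zero, sub_zero] at hk

lemma sg_mem_pow (r : ℕ) (w : Acyc F) (hw : w ∈ (mI F) ^ r) : sg F w ∈ (mI F) ^ r := by
  have h1 : sg F w ∈ Ideal.map (sg F).toAlgHom.toRingHom ((mI F) ^ r) :=
    Ideal.mem_map_of_mem _ hw
  have h2 : Ideal.map (sg F).toAlgHom.toRingHom ((mI F) ^ r) ≤ (mI F) ^ r := by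
    rw [Ideal.map_pow]
    refine Ideal.pow_right_mono ?_ r
    rw [mI, Ideal.map_span, Set.image_singleton]
    have h3 : (sg F).toAlgHom.toRingHom (gk F 1 - 1) = gk F 7 - 1 := by
      show sg F (gk F 1 - 1) = gk F 7 - 1
      rw [map_sub, map_one, sg_gk, mul_one]
    rw [h3, Ideal.span_le, Set.singleton_subset_iff]
    exact gk_sub_one_mem F 7
  exact h2 h1

-- (A6)
lemma add_sg_mem (u : Acyc F) : u + sg F u ∈ (mI F) ^ 2 := by
  induction u using MonoidAlgebra.induction_on with
  | of g =>
      rw [gk_of, sg_gk]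
      set k' := Multiplicative.toAdd g with hk
      have key : gk F k' + gk F (7 * k') = gk F k' * (1 + gk F (3 * k')) ^ 2 := by
        rw [show ((1 : Acyc F) + gk F (3 * k')) ^ 2 = (1 + gk F (3*k'))^(2^1) from by norm_num,
          add_pow_char_pow, one_pow, pow_one, gk_pow, mul_add, mul_one, gk_mul]
        congr 2
        ring
      rw [key]
      refine Ideal.mul_mem_left _ _ ?_
      refine Ideal.pow_mem_pow ?_ 2
      have h : (1 : Acyc F) + gk F (3 * k') = gk F (3 * k') - 1 := by
        rw [CharTwo.sub_eq_add, add_comm]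
      rw [h]
      exact gk_sub_one_mem F _
  | add f g hf hg =>
      have h : f + g + sg F (f + g) = (f + sg F f) + (g + sg F g) := by
        rw [map_add]; ring
      rw [h]; exact Submodule.add_mem _ hf hg
  | smul r f hf =>
      have h : r • f + sg F (r • f) = r • (f + sg F f) := by
        rw [map_smul, smul_add]
      rw [h]
      exact Submodule.smul_of_tower_mem _ r hf

-- (A7)
lemma sq_add_mem (u v : Acyc F) (h : epsA F u = epsA F v) :
    u * u + v * sg F v ∈ (mI F) ^ 2 := by
  set α : Acyc F := algebraMap F (Acyc F) (epsA F u) with hα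
  have hp : u - α ∈ mI F := by
    refine mem_mI_of_eps F _ ?_
    rw [map_sub, hα, AlgHom.commutes]
    simp
  have hq : v - α ∈ mI F := by
    refine mem_mI_of_eps F _ ?_
    rw [map_sub, hα, AlgHom.commutes, h]
    simp
  have h2 : (2 : Acyc F) = 0 := by
    exact_mod_cast CharP.cast_eq_zero (Acyc F) 2
  have hsα : sg F α = α := by rw [hα]; exact AlgEquiv.commutes _ _
  have expand : u * u + v * sg F v
      = (u - α) * (u - α) + (v - α) * sg F (v - α) + α * ((v - α) + sg F (v - α))
        + 2 * (α * α + α * (u - α)) := by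
    rw [map_sub, hsα]; ring
  rw [expand, h2, zero_mul, add_zero]
  refine Submodule.add_mem _ ?_ ?_
  · refine Submodule.add_mem _ ?_ ?_
    · rw [sq]
      exact Ideal.mul_mem_mul hp hp
    · rw [sq]
      have := sg_mem_pow F 1 _ ((pow_one (mI F)) ▸ hq)
      rw [pow_one] at this
      exact Ideal.mul_mem_mul hq this
  · exact Ideal.mul_mem_left _ _ (add_sg_mem F (v - α))

end

-- ==================== QD32 group lemmas ====================

def aQ : QD32 := PresentedGroup.of (rels := qdRels 5) 0
def xQ : QD32 := PresentedGroup.of (rels := qdRels 5) 1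

lemma qd_rel (r : FreeGroup (Fin 2)) (hr : r ∈ qdRels 5) :
    PresentedGroup.mk (qdRels 5) r = 1 :=
  (QuotientGroup.eq_one_iff r).mpr (Subgroup.subset_normalClosure hr)

lemma aQ_pow_16 : aQ ^ 16 = 1 := by
  have h := qd_rel (FreeGroup.of 0 ^ (2 ^ (5 - 1))) (by left; rfl)
  rw [map_pow] at h
  norm_num at h
  exact h

lemma xQ_sq : xQ * xQ = 1 := by
  have h := qd_rel (FreeGroup.of 1 ^ 2) (by right; left; rfl)
  rw [map_pow] at h
  rw [pow_two] at h
  exact h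

lemma xQ_inv : xQ⁻¹ = xQ := inv_eq_of_mul_eq_one_right xQ_sq

lemma xQ_aQ_xQ : xQ * aQ * xQ = aQ ^ 7 := by
  have h := qd_rel (FreeGroup.of 1 * FreeGroup.of 0 * FreeGroup.of 1 *
      (FreeGroup.of 0 ^ (2 ^ (5 - 2) - 1))⁻¹) (by right; right; exact rfl)
  rw [map_mul, map_mul, map_mul, map_inv, map_pow] at h
  norm_num at h
  rw [mul_inv_eq_one] at h
  exact h

lemma xQ_conj_zpow (m : ℤ) : xQ * aQ ^ m = aQ ^ (7 * m) * xQ := by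
  have hinv : xQ⁻¹ = xQ := xQ_inv
  have hconj : xQ * aQ * xQ⁻¹ = aQ ^ (7:ℤ) := by
    rw [hinv, xQ_aQ_xQ, ← zpow_natCast]
    norm_num
  have h2 : xQ * aQ ^ m * xQ⁻¹ = aQ ^ (7 * m) := by
    have hc : (xQ * aQ * xQ⁻¹) ^ m = xQ * aQ ^ m * xQ⁻¹ := conj_zpow
    rw [← hc, hconj, ← zpow_mul]
  rw [← h2]
  group



-- ==================== χ : C16 → QD32 ====================

noncomputable def chiF : {f : ℤ →+ Additive QD32 // f (16:ℕ) = 0} :=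
  ⟨(zmultiplesHom (Additive QD32)) (Additive.ofMul aQ), by
    show ((16:ℕ):ℤ) • Additive.ofMul aQ = 0
    rw [← ofMul_zpow, zpow_natCast, aQ_pow_16]
    rfl⟩

noncomputable def chi : Zm →* QD32 :=
  AddMonoidHom.toMultiplicativeLeft (ZMod.lift 16 chiF)

lemma chi_int (m : ℤ) : chi (Multiplicative.ofAdd ((m : ZMod 16))) = aQ ^ m := by
  show Additive.toMul ((ZMod.lift 16 chiF) ((m : ZMod 16))) = aQ ^ m
  rw [ZMod.lift_coe]
  rfl

lemma zmod_surj (k : ZMod 16) : ∃ m : ℤ, k = (m : ZMod 16) :=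
  ⟨(k.val : ℤ), by push_cast; exact (ZMod.natCast_rightInverse k).symm⟩

lemma chi_conj (k : ZMod 16) :
    xQ * chi (Multiplicative.ofAdd k) = chi (Multiplicative.ofAdd (7 * k)) * xQ := by
  obtain ⟨m, rfl⟩ := zmod_surj k
  rw [show ((7:ZMod 16) * ((m:ℤ) : ZMod 16) : ZMod 16) = ((7 * m : ℤ) : ZMod 16) by push_cast; ring]
  rw [chi_int, chi_int, xQ_conj_zpow]

lemma chi_one' : chi (Multiplicative.ofAdd (1 : ZMod 16)) = aQ := by
  have := chi_int 1
  norm_num at this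
  exact this

lemma chi_neg_one : chi (Multiplicative.ofAdd (-1 : ZMod 16)) = aQ⁻¹ := by
  rw [show (-1 : ZMod 16) = ((-1:ℤ) : ZMod 16) by push_cast; ring, chi_int, zpow_neg_one]

-- ==================== matrix representation ====================

noncomputable section Rep

variable (F : Type) [Field F] [CharP F 2]

abbrev MA : Type := Matrix (Fin 2) (Fin 2) (Acyc F)

abbrev FG : Type := MonoidAlgebra F QD32

def dm (j k : ZMod 16) : MA F := !![gk F j, 0; 0, gk F k]

lemma dm_mul (j k j' k' : ZMod 16) : dm F j k * dm F j' k' = dm F (j + j') (k + k') := by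
  rw [dm, dm, dm, Matrix.mul_fin_two]
  simp [gk_mul]

lemma dm_one : dm F 0 0 = 1 := by
  rw [dm, Matrix.one_fin_two, gk_zero]

lemma dm_pow (j k : ZMod 16) (n : ℕ) : dm F j k ^ n = dm F (n * j) (n * k) := by
  induction n with
  | zero => simp [dm_one]
  | succ n ih =>
      rw [pow_succ, ih, dm_mul]
      congr 1 <;> push_cast <;> ring

def wm : MA F := !![0, 1; 1, 0]

lemma wm_mul_wm : wm F * wm F = 1 := by
  rw [wm, Matrix.mul_fin_two, Matrix.one_fin_two]
  simp

noncomputable def u0 : (MA F)ˣ :=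
  ⟨dm F 1 7, dm F (-1) (-7), by rw [dm_mul]; norm_num; exact dm_one F, by rw [dm_mul]; norm_num; exact dm_one F⟩

noncomputable def u1 : (MA F)ˣ := ⟨wm F, wm F, wm_mul_wm F, wm_mul_wm F⟩

noncomputable def frep : Fin 2 → (MA F)ˣ := ![u0 F, u1 F]

lemma frep_rels : ∀ r ∈ qdRels 5, FreeGroup.lift (frep F) r = 1 := by
  intro r hr
  rcases hr with h | h | h
  · subst h
    rw [map_pow, Units.ext_iff, FreeGroup.lift_apply_of, Units.val_pow_eq_pow_val, Units.val_one]
    show (dm F 1 7) ^ (2 ^ (5-1)) = 1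
    rw [dm_pow]
    rw [show (((2^(5-1) : ℕ) : ZMod 16) * 1 : ZMod 16) = 0 by decide,
        show (((2^(5-1) : ℕ) : ZMod 16) * 7 : ZMod 16) = 0 by decide]
    exact dm_one F
  · subst h
    rw [map_pow, Units.ext_iff, FreeGroup.lift_apply_of, Units.val_pow_eq_pow_val, Units.val_one]
    show (wm F) ^ 2 = 1
    rw [pow_two]
    exact wm_mul_wm F
  · rw [Set.mem_singleton_iff] at h
    subst h
    rw [map_mul, map_mul, map_mul, map_inv, map_pow, FreeGroup.lift_apply_of, FreeGroup.lift_apply_of,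
      mul_inv_eq_one, Units.ext_iff, Units.val_mul, Units.val_mul, Units.val_pow_eq_pow_val]
    show wm F * dm F 1 7 * wm F = dm F 1 7 ^ (2 ^ (5-2) - 1)
    rw [dm_pow,
      show (((2^(5-2)-1 : ℕ) : ZMod 16) * 1 : ZMod 16) = 7 by decide,
      show (((2^(5-2)-1 : ℕ) : ZMod 16) * 7 : ZMod 16) = 1 by decide,
      wm, dm, dm, Matrix.mul_fin_two, Matrix.mul_fin_two]
    simp

noncomputable def rhoU : QD32 →* (MA F)ˣ := PresentedGroup.toGroup (frep_rels F)

noncomputable def rho : QD32 →* MA F := (Units.coeHom (MA F)).comp (rhoU F)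

lemma rho_aQ : rho F aQ = dm F 1 7 :=
  congrArg Units.val (PresentedGroup.toGroup.of (frep_rels F) (x := 0))

lemma rho_xQ : rho F xQ = wm F :=
  congrArg Units.val (PresentedGroup.toGroup.of (frep_rels F) (x := 1))

lemma rho_aQ_inv : rho F aQ⁻¹ = dm F (-1) (-7) := by
  have h : (rhoU F) aQ⁻¹ = (u0 F)⁻¹ := by
    rw [map_inv]
    exact congrArg Inv.inv (PresentedGroup.toGroup.of (frep_rels F) (x := 0))
  show ((rhoU F) aQ⁻¹ : MA F) = dm F (-1) (-7)
  rw [h]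
  rfl

lemma rho_xQ_inv : rho F xQ⁻¹ = wm F := by
  have h : (rhoU F) xQ⁻¹ = (u1 F)⁻¹ := by
    rw [map_inv]
    exact congrArg Inv.inv (PresentedGroup.toGroup.of (frep_rels F) (x := 1))
  show ((rhoU F) xQ⁻¹ : MA F) = wm F
  rw [h]
  rfl

end Rep

noncomputable section Rep2

variable (F : Type) [Field F] [CharP F 2]

-- entry helpers
lemma mul2 (m m' : MA F) (i j : Fin 2) :
    (m * m') i j = m i 0 * m' 0 j + m i 1 * m' 1 j := by
  rw [Matrix.mul_apply, Fin.sum_univ_two]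

def SP (m : MA F) : Prop := m 1 0 = sg F (m 0 1) ∧ m 1 1 = sg F (m 0 0)

def epsS (m : MA F) : F := epsA F (m 0 0) + epsA F (m 0 1)

def psi : Acyc F →ₐ[F] FG F :=
  MonoidAlgebra.lift F (FG F) Zm ((MonoidAlgebra.of F QD32).comp chi)

def Xg : FG F := MonoidAlgebra.of F QD32 xQ

def Psi (m : MA F) : FG F := psi F (m 0 0) + psi F (m 0 1) * Xg F

lemma psi_gk (k : ZMod 16) :
    psi F (gk F k) = MonoidAlgebra.of F QD32 (chi (Multiplicative.ofAdd k)) := by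
  rw [gk, psi, MonoidAlgebra.lift_of]
  rfl

lemma Xg_mul_Xg : Xg F * Xg F = 1 := by
  rw [Xg, ← map_mul, xQ_sq, map_one]

lemma Xg_psi (w : Acyc F) : Xg F * psi F w = psi F (sg F w) * Xg F := by
  induction w using MonoidAlgebra.induction_on with
  | of g =>
      rw [gk_of, psi_gk, sg_gk, psi_gk, Xg, ← map_mul, ← map_mul, chi_conj]
  | add f g hf hg =>
      rw [map_add, map_add, map_add, mul_add, add_mul, hf, hg]
  | smul r f hf =>
      rw [map_smul, map_smul, map_smul, mul_smul_comm, hf, smul_mul_assoc]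

lemma SP_one : SP F 1 := by
  constructor <;> · rw [Matrix.one_fin_two]; simp

lemma SP_mul {m m' : MA F} (h : SP F m) (h' : SP F m') : SP F (m * m') := by
  obtain ⟨h1, h2⟩ := h
  obtain ⟨h1', h2'⟩ := h'
  constructor
  · simp only [mul2, h1, h2, h1', h2', map_add, map_mul, sg_sg]
    ring
  · simp only [mul2, h1, h2, h1', h2', map_add, map_mul, sg_sg]
    ring

lemma epsS_mul {m m' : MA F} (h : SP F m) (h' : SP F m') :
    epsS F (m * m') = epsS F m * epsS F m' := by
  obtain ⟨h1, h2⟩ := h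
  obtain ⟨h1', h2'⟩ := h'
  rw [epsS, epsS, epsS, mul2, mul2, h1', h2']
  rw [map_add, map_add, map_mul, map_mul, map_mul, map_mul, epsA_sg, epsA_sg]
  ring

lemma Psi_mul {m m' : MA F} (h : SP F m) (h' : SP F m') :
    Psi F (m * m') = Psi F m * Psi F m' := by
  obtain ⟨h1, h2⟩ := h
  obtain ⟨h1', h2'⟩ := h'
  rw [Psi, Psi, Psi, mul2, mul2, h1', h2']
  rw [add_mul, mul_add, mul_add]
  have e1 : psi F (m 0 0) * (psi F (m' 0 1) * Xg F) = psi F (m 0 0 * m' 0 1) * Xg F := by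
    rw [map_mul, mul_assoc]
  have e2 : psi F (m 0 1) * Xg F * psi F (m' 0 0) = psi F (m 0 1 * sg F (m' 0 0)) * Xg F := by
    rw [mul_assoc, Xg_psi, map_mul, mul_assoc]
  have e3 : psi F (m 0 1) * Xg F * (psi F (m' 0 1) * Xg F) = psi F (m 0 1 * sg F (m' 0 1)) := by
    rw [mul_assoc, ← mul_assoc (Xg F), Xg_psi, mul_assoc, Xg_mul_Xg, mul_one, ← map_mul]
  rw [e1, e2, e3, map_add, map_add, map_mul, map_mul, add_mul]
  abel

-- generator computations
lemma dm_entries (j k : ZMod 16) :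
    dm F j k 0 0 = gk F j ∧ dm F j k 0 1 = 0 ∧ dm F j k 1 0 = 0 ∧ dm F j k 1 1 = gk F k := by
  refine ⟨?_, ?_, ?_, ?_⟩ <;> · rw [dm]; simp

lemma wm_entries :
    wm F 0 0 = 0 ∧ wm F 0 1 = 1 ∧ wm F 1 0 = 1 ∧ wm F 1 1 = 0 := by
  refine ⟨?_, ?_, ?_, ?_⟩ <;> · rw [wm]; simp

lemma SP_dm (j : ZMod 16) : SP F (dm F j (7 * j)) := by
  obtain ⟨e1, e2, e3, e4⟩ := dm_entries F j (7 * j)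
  exact ⟨by rw [e3, e2, map_zero], by rw [e4, e1, sg_gk]⟩

lemma epsS_dm (j k : ZMod 16) : epsS F (dm F j k) = 1 := by
  obtain ⟨e1, e2, e3, e4⟩ := dm_entries F j k
  rw [epsS, e1, e2, epsA_gk, map_zero, add_zero]

lemma Psi_dm (j k : ZMod 16) :
    Psi F (dm F j k) = MonoidAlgebra.of F QD32 (chi (Multiplicative.ofAdd j)) := by
  obtain ⟨e1, e2, e3, e4⟩ := dm_entries F j k
  rw [Psi, e1, e2, map_zero, zero_mul, add_zero, psi_gk]

lemma SP_wm : SP F (wm F) := by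
  obtain ⟨e1, e2, e3, e4⟩ := wm_entries F
  exact ⟨by rw [e3, e2, map_one], by rw [e4, e1, map_zero]⟩

lemma epsS_wm : epsS F (wm F) = 1 := by
  obtain ⟨e1, e2, e3, e4⟩ := wm_entries F
  rw [epsS, e1, e2, map_zero, map_one, zero_add]

lemma Psi_wm : Psi F (wm F) = Xg F := by
  obtain ⟨e1, e2, e3, e4⟩ := wm_entries F
  rw [Psi, e1, e2, map_zero, map_one, one_mul, zero_add]

def Kgood : Subgroup QD32 where
  carrier := {g | SP F (rho F g) ∧ epsS F (rho F g) = 1 ∧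
      Psi F (rho F g) = MonoidAlgebra.of F QD32 g ∧
      SP F (rho F g⁻¹) ∧ epsS F (rho F g⁻¹) = 1 ∧
      Psi F (rho F g⁻¹) = MonoidAlgebra.of F QD32 g⁻¹}
  one_mem' := by
    have h1 : rho F (1 : QD32) = 1 := map_one _
    have hP1 : Psi F (1 : MA F) = 1 := by
      have e0 : (1 : MA F) 0 0 = 1 := by rw [Matrix.one_fin_two]; simp
      have e1 : (1 : MA F) 0 1 = 0 := by rw [Matrix.one_fin_two]; simp
      rw [Psi, e0, e1, map_zero, zero_mul, add_zero, map_one]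
    have hE1 : epsS F (1 : MA F) = 1 := by
      have e0 : (1 : MA F) 0 0 = 1 := by rw [Matrix.one_fin_two]; simp
      have e1 : (1 : MA F) 0 1 = 0 := by rw [Matrix.one_fin_two]; simp
      rw [epsS, e0, e1, map_zero, map_one, add_zero]
    have hinv : ((1:QD32)⁻¹ : QD32) = 1 := inv_one
    refine ⟨?_, ?_, ?_, ?_, ?_, ?_⟩
    · rw [h1]; exact SP_one F
    · rw [h1]; exact hE1
    · rw [h1, hP1, map_one]
    · rw [hinv, h1]; exact SP_one F
    · rw [hinv, h1]; exact hE1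
    · rw [hinv, h1, hP1, map_one]
  inv_mem' := by
    rintro g ⟨h1, h2, h3, h4, h5, h6⟩
    exact ⟨h4, h5, h6, by rwa [inv_inv], by rwa [inv_inv], by rwa [inv_inv]⟩
  mul_mem' := by
    rintro g h ⟨g1, g2, g3, g4, g5, g6⟩ ⟨k1, k2, k3, k4, k5, k6⟩
    have hm : rho F (g * h) = rho F g * rho F h := map_mul _ _ _
    have hmi : rho F ((g * h)⁻¹) = rho F h⁻¹ * rho F g⁻¹ := by
      rw [mul_inv_rev, map_mul]
    refine ⟨?_, ?_, ?_, ?_, ?_, ?_⟩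
    · rw [hm]; exact SP_mul F g1 k1
    · rw [hm, epsS_mul F g1 k1, g2, k2, mul_one]
    · rw [hm, Psi_mul F g1 k1, g3, k3, map_mul]
    · rw [hmi]; exact SP_mul F k4 g4
    · rw [hmi, epsS_mul F k4 g4, k5, g5, mul_one]
    · rw [hmi, Psi_mul F k4 g4, k6, g6, ← map_mul, mul_inv_rev]

lemma all_good (g : QD32) : g ∈ Kgood F := by
  refine PresentedGroup.generated_by (qdRels 5) (Kgood F) ?_ g
  intro j
  fin_cases j
  · -- aQ
    show aQ ∈ Kgood F
    have h7 : (7 : ZMod 16) * 1 = 7 := by decide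
    have h7' : (7 : ZMod 16) * (-1) = -7 := by decide
    refine ⟨?_, ?_, ?_, ?_, ?_, ?_⟩
    · rw [rho_aQ, show (7 : ZMod 16) = 7 * 1 by rw [h7]]; exact SP_dm F 1
    · rw [rho_aQ]; exact epsS_dm F 1 7
    · rw [rho_aQ, Psi_dm, chi_one']
    · rw [rho_aQ_inv, show (-7 : ZMod 16) = 7 * (-1) by rw [h7']]; exact SP_dm F (-1)
    · rw [rho_aQ_inv]; exact epsS_dm F (-1) (-7)
    · rw [rho_aQ_inv, Psi_dm, chi_neg_one]
  · -- xQ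
    show xQ ∈ Kgood F
    refine ⟨?_, ?_, ?_, ?_, ?_, ?_⟩
    · rw [rho_xQ]; exact SP_wm F
    · rw [rho_xQ]; exact epsS_wm F
    · rw [rho_xQ, Psi_wm, Xg]
    · rw [rho_xQ_inv]; exact SP_wm F
    · rw [rho_xQ_inv]; exact epsS_wm F
    · rw [rho_xQ_inv, Psi_wm, Xg, xQ_inv]

lemma SP_rho (g : QD32) : SP F (rho F g) := (all_good F g).1
lemma epsS_rho (g : QD32) : epsS F (rho F g) = 1 := (all_good F g).2.1
lemma Psi_rho (g : QD32) : Psi F (rho F g) = MonoidAlgebra.of F QD32 g := (all_good F g).2.2.1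

end Rep2

noncomputable section Rep3

variable (F : Type) [Field F] [CharP F 2]

def Phi : FG F →ₐ[F] MA F := MonoidAlgebra.lift F (MA F) QD32 (rho F)

def epsFG : FG F →ₐ[F] F := MonoidAlgebra.lift F F QD32 1

instance : CharP (FG F) 2 := charP_of_injective_algebraMap' F 2

lemma Phi_of (g : QD32) : Phi F (MonoidAlgebra.of F QD32 g) = rho F g := by
  rw [Phi, MonoidAlgebra.lift_of]

lemma epsFG_of (g : QD32) : epsFG F (MonoidAlgebra.of F QD32 g) = 1 := by
  rw [epsFG, MonoidAlgebra.lift_of]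
  rfl

-- closure of SP under add/smul
lemma SP_add {m m' : MA F} (h : SP F m) (h' : SP F m') : SP F (m + m') := by
  obtain ⟨h1, h2⟩ := h; obtain ⟨h1', h2'⟩ := h'
  constructor <;> simp [Matrix.add_apply, h1, h2, h1', h2', map_add]

lemma SP_smul {m : MA F} (c : F) (h : SP F m) : SP F (c • m) := by
  obtain ⟨h1, h2⟩ := h
  constructor <;> simp [Matrix.smul_apply, h1, h2, map_smul]

lemma Psi_add (m m' : MA F) : Psi F (m + m') = Psi F m + Psi F m' := by
  rw [Psi, Psi, Psi, Matrix.add_apply, Matrix.add_apply, map_add, map_add, add_mul]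
  abel

lemma Psi_smul (c : F) (m : MA F) : Psi F (c • m) = c • Psi F m := by
  rw [Psi, Psi, Matrix.smul_apply, Matrix.smul_apply, map_smul, map_smul,
    smul_mul_assoc, smul_add]

lemma epsS_add (m m' : MA F) : epsS F (m + m') = epsS F m + epsS F m' := by
  rw [epsS, epsS, epsS, Matrix.add_apply, Matrix.add_apply, map_add, map_add]
  ring

lemma epsS_smul (c : F) (m : MA F) : epsS F (c • m) = c * epsS F m := by
  rw [epsS, epsS, Matrix.smul_apply, Matrix.smul_apply, map_smul, map_smul,
    smul_eq_mul, smul_eq_mul]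
  ring

lemma SP_Phi (j : FG F) : SP F (Phi F j) := by
  induction j using MonoidAlgebra.induction_on with
  | of g => rw [Phi_of]; exact SP_rho F g
  | add f g hf hg => rw [map_add]; exact SP_add F hf hg
  | smul r f hf => rw [map_smul]; exact SP_smul F r hf

lemma epsS_Phi (j : FG F) : epsS F (Phi F j) = epsFG F j := by
  induction j using MonoidAlgebra.induction_on with
  | of g => rw [Phi_of, epsS_rho, epsFG_of]
  | add f g hf hg => rw [map_add, map_add, epsS_add, hf, hg]
  | smul r f hf => rw [map_smul, map_smul, epsS_smul, hf, smul_eq_mul]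

lemma Psi_Phi (j : FG F) : Psi F (Phi F j) = j := by
  induction j using MonoidAlgebra.induction_on with
  | of g => rw [Phi_of, Psi_rho]
  | add f g hf hg => rw [map_add, Psi_add, hf, hg]
  | smul r f hf => rw [map_smul, Psi_smul, hf]

-- entries in ideal
def EI (I : Ideal (Acyc F)) (m : MA F) : Prop := ∀ i j : Fin 2, m i j ∈ I

lemma EI_mul {I J : Ideal (Acyc F)} {m m' : MA F} (h : EI F I m) (h' : EI F J m') :
    EI F (I * J) (m * m') := by
  intro i j
  rw [mul2]
  exact Submodule.add_mem _ (Ideal.mul_mem_mul (h i 0) (h' 0 j))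
    (Ideal.mul_mem_mul (h i 1) (h' 1 j))

lemma EI_sq {m : MA F} (hS : SP F m) (he : epsA F (m 0 0) = epsA F (m 0 1)) :
    EI F ((mI F) ^ 2) (m * m) := by
  obtain ⟨h1, h2⟩ := hS
  intro i j
  fin_cases i <;> fin_cases j
  · show (m * m) 0 0 ∈ (mI F) ^ 2
    rw [mul2, h1]
    exact sq_add_mem F _ _ he
  · show (m * m) 0 1 ∈ (mI F) ^ 2
    rw [mul2, h2]
    have e : m 0 0 * m 0 1 + m 0 1 * sg F (m 0 0) = m 0 1 * (m 0 0 + sg F (m 0 0)) := by ring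
    rw [e]
    exact Ideal.mul_mem_left _ _ (add_sg_mem F _)
  · show (m * m) 1 0 ∈ (mI F) ^ 2
    rw [mul2, h1, h2]
    have e : sg F (m 0 1) * m 0 0 + sg F (m 0 0) * sg F (m 0 1)
        = sg F (m 0 1) * (m 0 0 + sg F (m 0 0)) := by ring
    rw [e]
    exact Ideal.mul_mem_left _ _ (add_sg_mem F _)
  · show (m * m) 1 1 ∈ (mI F) ^ 2
    rw [mul2, h1, h2]
    have e : sg F (m 0 1) * m 0 1 + sg F (m 0 0) * sg F (m 0 0)
        = sg F (m 0 0 * m 0 0 + m 0 1 * sg F (m 0 1)) := by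
      rw [map_add, map_mul, map_mul, sg_sg]
      ring
    rw [e]
    exact sg_mem_pow F 2 _ (sq_add_mem F _ _ he)

lemma key_nilpotent (j : FG F) (hj : epsFG F j = 0) : j ^ 16 = 0 := by
  set m := Phi F j with hm
  have hS : SP F m := SP_Phi F j
  have he0 : epsA F (m 0 0) + epsA F (m 0 1) = 0 := by
    have := epsS_Phi F j
    rw [hj] at this
    rw [← this]
    rfl
  have he : epsA F (m 0 0) = epsA F (m 0 1) := by
    have hbb : epsA F (m 0 1) + epsA F (m 0 1) = 0 := CharTwo.add_self_eq_zero _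
    linear_combination he0 - hbb
  have e2 : EI F ((mI F) ^ 2) (m * m) := EI_sq F hS he
  have e4 : EI F ((mI F) ^ 4) ((m * m) * (m * m)) := by
    have := EI_mul F e2 e2
    rwa [← pow_add] at this
  have e8 : EI F ((mI F) ^ 8) (((m * m) * (m * m)) * ((m * m) * (m * m))) := by
    have := EI_mul F e4 e4
    rwa [← pow_add] at this
  have e16 : EI F ((mI F) ^ 16)
      ((((m * m) * (m * m)) * ((m * m) * (m * m))) * (((m * m) * (m * m)) * ((m * m) * (m * m)))) := by
    have := EI_mul F e8 e8
    rwa [← pow_add] at this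
  rw [mI_pow_16] at e16
  have hm16 : m ^ 16 = 0 := by
    have hexp : m ^ 16 =
        (((m * m) * (m * m)) * ((m * m) * (m * m))) * (((m * m) * (m * m)) * ((m * m) * (m * m))) := by
      symm
      simp only [← pow_two, ← pow_add]
      rw [← pow_mul, ← pow_mul, ← pow_mul]
    rw [hexp]
    ext i j
    have := e16 i j
    rw [Ideal.mem_bot] at this
    rw [this]
    rfl
  have : Phi F (j ^ 16) = 0 := by rw [map_pow, ← hm, hm16]
  have hps : Psi F (Phi F (j ^ 16)) = j ^ 16 := Psi_Phi F _
  rw [this] at hps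
  rw [← hps]
  have h00 : (0 : MA F) 0 0 = 0 := rfl
  have h01 : (0 : MA F) 0 1 = 0 := rfl
  rw [Psi, h00, h01, map_zero, zero_mul, add_zero]

end Rep3

open MonoidAlgebra
set_option linter.unusedSectionVars false

noncomputable section Final

variable (F : Type) [Field F] [CharP F 2]

lemma ker_isMaximal : (RingHom.ker (epsFG F).toRingHom).IsMaximal := by
  rw [Ideal.isMaximal_iff]
  constructor
  · intro h
    have : epsFG F 1 = 0 := h
    rw [map_one] at this
    exact one_ne_zero this
  · intro J x hle hx hxJ
    have hc : epsFG F x ≠ 0 := fun h => hx h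
    have h1 : x - algebraMap F (FG F) (epsFG F x) ∈ RingHom.ker (epsFG F).toRingHom := by
      show epsFG F (x - algebraMap F (FG F) (epsFG F x)) = 0
      rw [map_sub, AlgHom.commutes]
      simp
    have h2 : algebraMap F (FG F) (epsFG F x) ∈ J := by
      have e : algebraMap F (FG F) (epsFG F x) = x - (x - algebraMap F (FG F) (epsFG F x)) :=
        (sub_sub_cancel x _).symm
      rw [e]
      exact Submodule.sub_mem J hxJ (hle h1)
    have h3 : (1 : FG F) = (epsFG F x)⁻¹ • (algebraMap F (FG F) (epsFG F x)) := by
      rw [Algebra.smul_def, ← map_mul, inv_mul_cancel₀ hc, map_one]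
    rw [h3]
    exact Submodule.smul_of_tower_mem J _ h2

lemma jac_le_ker : (⊥ : Ideal (FG F)).jacobson ≤ RingHom.ker (epsFG F).toRingHom := by
  rw [Ideal.jacobson]
  exact sInf_le ⟨bot_le, ker_isMaximal F⟩

lemma ker_le_jac : RingHom.ker (epsFG F).toRingHom ≤ (⊥ : Ideal (FG F)).jacobson := by
  intro k hk
  rw [Ideal.jacobson, Submodule.mem_sInf]
  rintro M ⟨-, hM⟩
  by_contra hkM
  have hlt : M < M ⊔ Ideal.span {k} := by
    refine left_lt_sup.mpr ?_
    intro hle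
    exact hkM (hle (Ideal.subset_span rfl))
  have htop : M ⊔ Ideal.span {k} = ⊤ := hM.1.2 _ hlt
  have h1 : (1 : FG F) ∈ M ⊔ Ideal.span {k} := by rw [htop]; exact Submodule.mem_top
  obtain ⟨y, hy, z, hz, hyz⟩ := Submodule.mem_sup.mp h1
  obtain ⟨r, hr⟩ := Submodule.mem_span_singleton.mp hz
  have hkker : epsFG F k = 0 := hk
  have hker : epsFG F (r • k) = 0 := by
    rw [smul_eq_mul, map_mul, hkker, mul_zero]
  have hnil : (r • k) ^ 16 = 0 := key_nilpotent F _ hker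
  have hyu : IsUnit y := by
    have e : y = 1 - r • k := by rw [hr]; exact eq_sub_of_add_eq hyz
    rw [e]
    exact IsNilpotent.isUnit_one_sub ⟨16, hnil⟩
  exact hM.ne_top (Ideal.eq_top_of_isUnit_mem M hy hyu)

-- the distinguished unit
def Ua : (FG F)ˣ := (MonoidAlgebra.of F QD32).toHomUnits aQ

lemma Ua_val : ((Ua F : (FG F)ˣ) : FG F) = MonoidAlgebra.of F QD32 aQ := rfl

lemma Ua_pow8_ne : ((Ua F : (FG F)ˣ) : FG F) ^ 8 ≠ 1 := by
  intro h
  have h2 : Phi F (((Ua F : (FG F)ˣ) : FG F) ^ 8) = 1 := by rw [h, map_one]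
  rw [map_pow, Ua_val, Phi_of, rho_aQ, dm_pow] at h2
  rw [show (((8:ℕ) : ZMod 16) * 1 : ZMod 16) = 8 by decide,
      show (((8:ℕ) : ZMod 16) * 7 : ZMod 16) = 8 by decide] at h2
  have h3 : gk F 8 = (1 : Acyc F) := by
    have := congrFun (congrFun (congrArg (fun (M : MA F) => fun i j => M i j) h2) 0) 0
    rw [dm] at this
    simpa using this
  rw [MonoidAlgebra.one_def] at h3
  rw [gk, MonoidAlgebra.of_apply] at h3
  have h4 := MonoidAlgebra.single_left_injective (M := Zm) (R := F) one_ne_zero h3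
  have : (Multiplicative.ofAdd (8 : ZMod 16)) ≠ (1 : Zm) := by decide
  exact this h4

end Final

theorem oneAddJacobson_exponent_QD32 (F : Type) [Field F] [Fintype F] [CharP F 2]
    (n : ℕ) (hn : 0 < n) (hq : Fintype.card F = 2 ^ n)
    (V₁ : Subgroup (MonoidAlgebra F QD32)ˣ)
    (hV : ∀ u : (MonoidAlgebra F QD32)ˣ,
      u ∈ V₁ ↔ (u : MonoidAlgebra F QD32) - 1 ∈ (⊥ : Ideal (MonoidAlgebra F QD32)).jacobson) :
    Monoid.exponent V₁ = 16 := by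
  classical
  have upper : ∀ y : V₁, y ^ 16 = 1 := by
    intro y
    have hmem : ((y : (MonoidAlgebra F QD32)ˣ) : MonoidAlgebra F QD32) - 1
        ∈ (⊥ : Ideal (MonoidAlgebra F QD32)).jacobson := (hV _).mp y.2
    have hker : epsFG F (((y : (MonoidAlgebra F QD32)ˣ) : MonoidAlgebra F QD32) - 1) = 0 :=
      jac_le_ker F hmem
    have hnil : (((y : (MonoidAlgebra F QD32)ˣ) : MonoidAlgebra F QD32) - 1) ^ 16 = 0 :=
      key_nilpotent F _ hker
    have h16 : ((y : (MonoidAlgebra F QD32)ˣ) : MonoidAlgebra F QD32) ^ 16 = 1 := by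
      have hco : Commute (1 : FG F)
          (((y : (MonoidAlgebra F QD32)ˣ) : MonoidAlgebra F QD32) - 1) := Commute.one_left _
      have hb := add_pow_char_pow_of_commute 2 4 hco
      have he : (1 : FG F) + (((y : (MonoidAlgebra F QD32)ˣ) : MonoidAlgebra F QD32) - 1)
          = ((y : (MonoidAlgebra F QD32)ˣ) : MonoidAlgebra F QD32) := by abel
      rw [he] at hb
      have h24 : (2:ℕ) ^ 4 = 16 := by norm_num
      rw [h24] at hb
      rw [hb, hnil, one_pow, add_zero]
    have : ((y ^ 16 : V₁) : (MonoidAlgebra F QD32)ˣ) = 1 := by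
      rw [SubgroupClass.coe_pow]
      exact Units.ext (by rw [Units.val_pow_eq_pow_val, h16, Units.val_one])
    exact Subtype.ext this
  have hdvd : Monoid.exponent V₁ ∣ 16 := Monoid.exponent_dvd_of_forall_pow_eq_one upper
  -- lower bound
  have hUmem : Ua F ∈ V₁ := by
    rw [hV]
    refine ker_le_jac F ?_
    show epsFG F (((Ua F : (MonoidAlgebra F QD32)ˣ) : MonoidAlgebra F QD32) - 1) = 0
    rw [map_sub, Ua_val, epsFG_of, map_one, sub_self]
  set y0 : V₁ := ⟨Ua F, hUmem⟩ with hy0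
  have hy8 : y0 ^ 8 ≠ 1 := by
    intro h
    have h1 : ((y0 ^ 8 : V₁) : (MonoidAlgebra F QD32)ˣ) = 1 := by rw [h]; rfl
    rw [SubgroupClass.coe_pow] at h1
    have h2 : ((Ua F : (MonoidAlgebra F QD32)ˣ) : MonoidAlgebra F QD32) ^ 8 = 1 := by
      rw [← Units.val_pow_eq_pow_val]
      show (((y0 : (MonoidAlgebra F QD32)ˣ) ^ 8 : (MonoidAlgebra F QD32)ˣ) : MonoidAlgebra F QD32) = 1
      rw [h1, Units.val_one]
    exact Ua_pow8_ne F h2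
  have hordy : orderOf y0 = 16 := by
    have h16 : y0 ^ 16 = 1 := upper y0
    have hdv : orderOf y0 ∣ 2 ^ 4 := by
      have := orderOf_dvd_of_pow_eq_one h16
      norm_num at this ⊢
      exact this
    obtain ⟨kk, hkk, heq⟩ := (Nat.dvd_prime_pow Nat.prime_two).mp hdv
    have hkk4 : kk = 4 := by
      by_contra hne
      have hkk3 : kk ≤ 3 := by omega
      have : orderOf y0 ∣ 8 := by
        rw [heq]
        calc (2:ℕ)^kk ∣ 2^3 := pow_dvd_pow 2 hkk3
        _ = 8 := by norm_num
      exact hy8 (orderOf_dvd_iff_pow_eq_one.mp this)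
    rw [heq, hkk4]
    norm_num
  have h16dvd : 16 ∣ Monoid.exponent V₁ := by
    rw [← hordy]
    exact Monoid.order_dvd_exponent y0
  exact Nat.dvd_antisymm hdvd h16dvd
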